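/- Removing from a finite weighted graph all edges of weight strictly less than θ does not change the connected components if and only if every removed edge ⟨k,l⟩ satisfies A*_kl ≥ θ in the remaining graph; in particular, if A_kl < A*_kl computed in G minus the edge ⟨k,l⟩, then deleting edge ⟨k,l⟩ alone does not change the connected components of G. -/

import Mathlib

open SimpleGraph

/-- The graph obtained from `G` by keeping only the edges of weight `≥ θ`. -/
def thresholded {V : Type*} (G : SimpleGraph V) (A : Sym2 V → ℝ) (θ : ℝ) :
    SimpleGraph V where
  Adj i j := G.Adj i j ∧ θ ≤ A s(i, j)
  symm := by
    constructor
    intro i j h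
    exact ⟨h.1.symm, by rw [Sym2.eq_swap]; exact h.2⟩
  loopless := by constructor; intro i h; exact G.irrefl h.1

/-- The bottleneck (minimal edge weight) of a walk, with value `⊤` for the empty walk. -/
noncomputable def bottleneck {V : Type*} {G : SimpleGraph V} (A : Sym2 V → ℝ) {i j : V}
    (p : G.Walk i j) : WithTop ℝ :=
  p.edges.foldr (fun e m => min (A e : WithTop ℝ) m) ⊤

lemma le_foldr_min {V : Type*} (A : Sym2 V → ℝ) (θ : ℝ) (L : List (Sym2 V))
    (h : ∀ e ∈ L, θ ≤ A e) :
    (θ : WithTop ℝ) ≤ L.foldr (fun e m => min (A e : WithTop ℝ) m) ⊤ := by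
  induction L with
  | nil => exact le_top
  | cons a t ih =>
    exact le_min (WithTop.coe_le_coe.mpr (h a (List.mem_cons_self)))
      (ih fun e he => h e (List.mem_cons_of_mem _ he))

lemma reach_of_adj {V : Type*} (G : SimpleGraph V) {H : SimpleGraph V}
    (h : ∀ a b, G.Adj a b → H.Reachable a b) {i j : V} (r : G.Reachable i j) :
    H.Reachable i j := by
  obtain ⟨p⟩ := r
  induction p with
  | nil => exact Reachable.refl _
  | cons h' _ ih => exact (h _ _ h').trans ih

/-- Thresholding at `θ` preserves the connected components iff every deleted edge
has maximin affinity `≥ θ` in the remaining graph; in particular, deleting a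
single edge whose weight is strictly below its maximin affinity in the remaining
graph does not change the connected components. -/
theorem stmt_13 {V : Type*} [Fintype V] (G : SimpleGraph V) (A : Sym2 V → ℝ)
    (θ : ℝ) :
    ((∀ i j : V, G.Reachable i j ↔ (thresholded G A θ).Reachable i j) ↔
      (∀ k l : V, G.Adj k l → A s(k, l) < θ →
        ∃ p : (thresholded G A θ).Walk k l, (θ : WithTop ℝ) ≤ bottleneck A p)) ∧
    (∀ k l : V, G.Adj k l →
      (∃ p : (G.deleteEdges {s(k, l)}).Walk k l,
        (A s(k, l) : WithTop ℝ) < bottleneck A p) →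
      ∀ i j : V, (G.deleteEdges {s(k, l)}).Reachable i j ↔ G.Reachable i j) := by
  constructor
  · constructor
    · intro h k l hkl _
      obtain ⟨p⟩ := (h k l).mp hkl.reachable
      refine ⟨p, le_foldr_min A θ p.edges fun e he => ?_⟩
      have hmem := p.edges_subset_edgeSet he
      induction e with
      | h a b => exact hmem.2
    · intro h i j
      constructor
      · refine reach_of_adj G (fun a b hab => ?_)
        by_cases hθ : θ ≤ A s(a, b)
        · exact Adj.reachable (G := thresholded G A θ) ⟨hab, hθ⟩
        · obtain ⟨p, _⟩ := h a b hab (lt_of_not_ge hθ)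
          exact ⟨p⟩
      · exact reach_of_adj (thresholded G A θ) fun a b hab => hab.1.reachable
  · intro k l hkl ⟨p, _⟩ i j
    constructor
    · refine reach_of_adj (G.deleteEdges {s(k, l)}) (fun a b hab => ?_)
      rw [SimpleGraph.deleteEdges_adj] at hab
      exact hab.1.reachable
    · refine reach_of_adj G (fun a b hab => ?_)
      by_cases he : s(a, b) = s(k, l)
      · rcases Sym2.eq_iff.mp he with ⟨rfl, rfl⟩ | ⟨rfl, rfl⟩
        · exact ⟨p⟩
        · exact Reachable.symm ⟨p⟩
      · exact Adj.reachable (by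
          rw [SimpleGraph.deleteEdges_adj]
          exact ⟨hab, by simpa using he⟩)
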